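/- Let G be a group with a torsion-free abelian normal subgroup A of finite index such that G^{ab} is finite. Set k = exp(G/A) and let x₁,...,x_m be a transversal of A in G. Then for all g ∈ G, (g^k)^{x₁} (g^k)^{x₂} ⋯ (g^k)^{x_m} = 1. In particular G satisfies a positive generalized identity of degree k·m with fixed conjugating elements. -/

import Mathlib

section PGIAux

variable {G : Type*} [Group G] (A : Subgroup G) [hN : A.Normal]

private lemma pgi_conj_mem (x : G) {a : G} (ha : a ∈ A) : x⁻¹ * a * x ∈ A := by
  simpa using hN.conj_mem a ha x⁻¹

private def pgiF (hab : ∀ a b : G, a ∈ A → b ∈ A → a * b = b * a) (q : G ⧸ A) (a : A) : A :=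
  Quotient.liftOn' q (fun x => (⟨x⁻¹ * ↑a * x, pgi_conj_mem A x a.2⟩ : A))
    (by
      intro x y hxy
      have hb : x⁻¹ * y ∈ A := QuotientGroup.leftRel_apply.mp hxy
      apply Subtype.ext
      show x⁻¹ * ↑a * x = y⁻¹ * ↑a * y
      have hcomm := hab (x⁻¹ * ↑a * x) (x⁻¹ * y) (pgi_conj_mem A x a.2) hb
      have key : y⁻¹ * ↑a * y = (x⁻¹ * y)⁻¹ * (x⁻¹ * ↑a * x) * (x⁻¹ * y) := by group
      rw [key, mul_assoc (x⁻¹ * y)⁻¹, hcomm, ← mul_assoc, inv_mul_cancel, one_mul])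

private lemma pgiF_mk (hab : ∀ a b : G, a ∈ A → b ∈ A → a * b = b * a) (x : G) (a : A) :
    pgiF A hab (QuotientGroup.mk x) a = ⟨x⁻¹ * ↑a * x, pgi_conj_mem A x a.2⟩ := rfl

end PGIAux

theorem positive_generalized_identity {G : Type*} [Group G]
    (A : Subgroup G) [A.Normal]
    (hab : ∀ a b : G, a ∈ A → b ∈ A → a * b = b * a)
    (htf : ∀ a : G, a ∈ A → IsOfFinOrder a → a = 1)
    (habfin : Finite (Abelianization G))
    (k : ℕ) (hk : Monoid.exponent (G ⧸ A) = k) (hk0 : k ≠ 0)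
    (xs : List G) (hnodup : (xs.map (QuotientGroup.mk (s := A))).Nodup)
    (hcover : ∀ q : G ⧸ A, q ∈ xs.map (QuotientGroup.mk (s := A))) :
    (∀ g : G, (xs.map (fun x => x⁻¹ * g ^ k * x)).prod = 1) ∧
      ∃ ys : List G, ys.length = k * xs.length ∧
        ∀ g : G, (ys.map (fun y => y⁻¹ * g * y)).prod = 1 := by
  classical
  haveI := habfin
  letI hAcomm : CommGroup A :=
    { (inferInstance : Group A) with mul_comm := fun a b => Subtype.ext (hab a b a.2 b.2) }
  haveI : Finite (G ⧸ A) := by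
    refine Finite.of_surjective
      (fun i : Fin (xs.map (QuotientGroup.mk (s := A))).length =>
        (xs.map (QuotientGroup.mk (s := A))).get i) ?_
    intro q
    obtain ⟨i, hi⟩ := List.get_of_mem (hcover q)
    exact ⟨i, hi⟩
  haveI : Fintype (G ⧸ A) := Fintype.ofFinite _
  set F := pgiF A hab with hF
  -- basic properties of F
  have F1 : ∀ q : G ⧸ A, F q 1 = 1 := by
    intro q
    induction q using QuotientGroup.induction_on with
    | H x => rw [hF, pgiF_mk]; apply Subtype.ext; simp
  have Fmul : ∀ (q : G ⧸ A) (a b : A), F q (a * b) = F q a * F q b := by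
    intro q a b
    induction q using QuotientGroup.induction_on with
    | H x =>
      rw [hF, pgiF_mk, pgiF_mk, pgiF_mk]
      apply Subtype.ext
      show x⁻¹ * (↑a * ↑b) * x = (x⁻¹ * ↑a * x) * (x⁻¹ * ↑b * x)
      group
  have Fconj : ∀ (q : G ⧸ A) (g : G) (a : A),
      F q ⟨g⁻¹ * ↑a * g, pgi_conj_mem A g a.2⟩ = F ((QuotientGroup.mk g) * q) a := by
    intro q g a
    induction q using QuotientGroup.induction_on with
    | H x =>
      have : ((QuotientGroup.mk g : G ⧸ A) * QuotientGroup.mk x) = QuotientGroup.mk (g * x) := by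
        rfl
      rw [this, hF, pgiF_mk, pgiF_mk]
      apply Subtype.ext
      show x⁻¹ * (g⁻¹ * ↑a * g) * x = (g * x)⁻¹ * ↑a * (g * x)
      group
  -- the norm map
  set N : A → A := fun a => ∏ q : G ⧸ A, F q a with hNdef
  have Nmul : ∀ a b : A, N (a * b) = N a * N b := by
    intro a b
    simp only [hNdef, Fmul, Finset.prod_mul_distrib]
  have None : N 1 = 1 := by simp [hNdef, F1]
  have Npow : ∀ (a : A) (t : ℕ), N (a ^ t) = N a ^ t := by
    intro a t
    induction t with
    | zero => simpa using None
    | succ n ih => rw [pow_succ, pow_succ, Nmul, ih]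
  have Ninv : ∀ a : A, N a⁻¹ = (N a)⁻¹ := by
    intro a
    have : N a * N a⁻¹ = 1 := by rw [← Nmul, mul_inv_cancel, None]
    exact eq_inv_of_mul_eq_one_left (by rwa [mul_comm] at this)
  have Nconj : ∀ (g : G) (a : A), N ⟨g⁻¹ * ↑a * g, pgi_conj_mem A g a.2⟩ = N a := by
    intro g a
    calc (∏ q : G ⧸ A, F q ⟨g⁻¹ * ↑a * g, pgi_conj_mem A g a.2⟩)
        = ∏ q : G ⧸ A, F ((QuotientGroup.mk g) * q) a :=
          Finset.prod_congr rfl fun q _ => Fconj q g a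
      _ = ∏ q : G ⧸ A, F q a :=
          Equiv.prod_comp (Equiv.mulLeft (QuotientGroup.mk g : G ⧸ A)) (fun q => F q a)
  -- the norm as a monoid hom, and the subgroup on which it vanishes
  set Nhom : A →* A := { toFun := N, map_one' := None, map_mul' := Nmul } with hNhom
  set K : Subgroup G := ⁅A, (⊤ : Subgroup G)⁆ with hKdef
  have hKA : K ≤ A := Subgroup.commutator_le_left A ⊤
  have hKS : K ≤ (Nhom.ker).map A.subtype := by
    rw [hKdef, Subgroup.commutator_le]
    intro a ha g _
    set a' : A := ⟨a, ha⟩ with ha'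
    refine ⟨a' * ⟨(g⁻¹)⁻¹ * ↑(a'⁻¹) * g⁻¹, pgi_conj_mem A g⁻¹ (a'⁻¹).2⟩, ?_, ?_⟩
    · have : Nhom (a' * ⟨(g⁻¹)⁻¹ * ↑(a'⁻¹) * g⁻¹, pgi_conj_mem A g⁻¹ (a'⁻¹).2⟩) = 1 := by
        show N (a' * ⟨(g⁻¹)⁻¹ * ↑(a'⁻¹) * g⁻¹, pgi_conj_mem A g⁻¹ (a'⁻¹).2⟩) = 1
        rw [Nmul, Nconj g⁻¹ a'⁻¹, Ninv, mul_inv_cancel]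
      exact this
    · rw [commutatorElement_def]
      have hcoe : (↑(a'⁻¹) : G) = a⁻¹ := rfl
      show (a * ((g⁻¹)⁻¹ * ↑(a'⁻¹) * g⁻¹) : G) = a * g * a⁻¹ * g⁻¹
      rw [hcoe]
      group
  have NK : ∀ (c : G) (hc : c ∈ K), N ⟨c, hKA hc⟩ = 1 := by
    intro c hc
    obtain ⟨b, hb, hbc⟩ := hKS hc
    have : (⟨c, hKA hc⟩ : A) = b := Subtype.ext hbc.symm
    rw [this]
    exact hb
  -- Schur-type argument in G ⧸ K
  have hAmapcen : A.map (QuotientGroup.mk' K) ≤ Subgroup.center (G ⧸ K) := by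
    rintro q ⟨a, ha, rfl⟩
    rw [Subgroup.mem_center_iff]
    intro z
    induction z using QuotientGroup.induction_on with
    | H g =>
      show QuotientGroup.mk g * QuotientGroup.mk a = QuotientGroup.mk a * QuotientGroup.mk g
      rw [← QuotientGroup.mk_mul, ← QuotientGroup.mk_mul]
      apply (QuotientGroup.eq (s := K)).mpr
      open scoped commutatorElement in
      have : (g * a)⁻¹ * (a * g) = ⁅a⁻¹, g⁻¹⁆ := by
        rw [commutatorElement_def]; group
      rw [this]
      exact Subgroup.commutator_mem_commutator (A.inv_mem ha) (Subgroup.mem_top g⁻¹)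
  have hAidx : (A.map (QuotientGroup.mk' K)).index = A.index :=
    Subgroup.index_map_eq A (QuotientGroup.mk'_surjective K)
      (by rw [QuotientGroup.ker_mk']; exact hKA)
  haveI : Subgroup.FiniteIndex (Subgroup.center (G ⧸ K)) := by
    constructor
    intro h0
    have hdvd := Subgroup.index_dvd_of_le hAmapcen
    rw [h0, hAidx] at hdvd
    exact Subgroup.index_ne_zero_of_finite (zero_dvd_iff.mp hdvd)
  -- key: N vanishes on A ∩ [G,G]
  have Nvanish : ∀ a : A, (a : G) ∈ commutator G → N a = 1 := by
    intro a hacomm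
    set n := (Subgroup.center (G ⧸ K)).index with hn
    have hn0 : n ≠ 0 := Subgroup.FiniteIndex.index_ne_zero
    have h2 : (QuotientGroup.mk' K) ↑a ∈ commutator (G ⧸ K) := by
      have hmem : (QuotientGroup.mk' K) ↑a ∈ (commutator G).map (QuotientGroup.mk' K) :=
        Subgroup.mem_map_of_mem _ hacomm
      rw [commutator_def, Subgroup.map_commutator] at hmem
      exact Subgroup.commutator_mono le_top le_top hmem
    open IsMulCommutative in
    have h3 := Abelianization.commutator_subset_ker
      (MonoidHom.transferCenterPow (G ⧸ K)) h2
    have h4 : ((QuotientGroup.mk' K) ↑a) ^ n = 1 := by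
      have := congrArg (Subtype.val) (MonoidHom.mem_ker.mp h3)
      rwa [MonoidHom.transferCenterPow_apply] at this
    have h5 : ((a : G)) ^ n ∈ K := by
      rw [← map_pow] at h4
      exact (QuotientGroup.eq_one_iff _).mp h4
    have h6 : N (a ^ n) = 1 := by
      have : (a ^ n : A) = ⟨(a : G) ^ n, hKA h5⟩ := by
        apply Subtype.ext; simp
      rw [this]
      exact NK _ h5
    rw [Npow] at h6
    have hfin : IsOfFinOrder ((N a : A) : G) := by
      apply isOfFinOrder_iff_pow_eq_one.mpr
      exact ⟨n, Nat.pos_of_ne_zero hn0, by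
        rw [← SubmonoidClass.coe_pow, h6]; rfl⟩
    have := htf _ (N a).2 hfin
    exact Subtype.ext this
  -- first part
  have part1 : ∀ g : G, (xs.map (fun x => x⁻¹ * g ^ k * x)).prod = 1 := by
    intro g
    have hgk : g ^ k ∈ A := by
      have h1 := Monoid.pow_exponent_eq_one (QuotientGroup.mk g : G ⧸ A)
      rw [hk] at h1
      have h2 : (QuotientGroup.mk' A) (g ^ k) = 1 := by
        rw [map_pow]; exact h1
      exact (QuotientGroup.eq_one_iff _).mp h2
    set a : A := ⟨g ^ k, hgk⟩ with hadef
    set e := Monoid.exponent (Abelianization G) with hedef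
    have he0 : e ≠ 0 := Monoid.exponent_ne_zero_of_finite
    have hge : g ^ e ∈ commutator G := by
      have h1 := Monoid.pow_exponent_eq_one (Abelianization.of g)
      rw [← map_pow] at h1
      exact (QuotientGroup.eq_one_iff _).mp h1
    have hNa : N a = 1 := by
      have hcae : ((a ^ e : A) : G) ∈ commutator G := by
        have hco : ((a ^ e : A) : G) = (g ^ e) ^ k := by
          rw [SubmonoidClass.coe_pow]
          show (g ^ k) ^ e = (g ^ e) ^ k
          rw [← pow_mul, mul_comm, pow_mul]
        rw [hco]
        exact pow_mem hge k
      have h6 := Nvanish (a ^ e) hcae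
      rw [Npow] at h6
      have hfin : IsOfFinOrder ((N a : A) : G) := isOfFinOrder_iff_pow_eq_one.mpr
        ⟨e, Nat.pos_of_ne_zero he0, by rw [← SubmonoidClass.coe_pow, h6]; rfl⟩
      exact Subtype.ext (htf _ (N a).2 hfin)
    have hlist : xs.map (fun x => x⁻¹ * g ^ k * x)
        = ((xs.map (QuotientGroup.mk (s := A))).map (fun q => ((F q a : A) : G))) := by
      rw [List.map_map]
      refine List.map_congr_left fun x _ => ?_
      show x⁻¹ * g ^ k * x = ((F (QuotientGroup.mk x) a : A) : G)
      rw [hF, pgiF_mk]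
    rw [hlist]
    calc ((xs.map (QuotientGroup.mk (s := A))).map (fun q => ((F q a : A) : G))).prod
        = ↑(((xs.map (QuotientGroup.mk (s := A))).map (fun q => F q a)).prod) := by
          have h := map_list_prod A.subtype
            ((xs.map (QuotientGroup.mk (s := A))).map (fun q => F q a))
          simp only [Subgroup.coe_subtype, List.map_map, Function.comp_def] at h
          simp only [List.map_map, Function.comp_def]
          exact h.symm
      _ = ↑(((xs.map (QuotientGroup.mk (s := A))).toFinset).prod (fun q => F q a)) := by
          rw [List.prod_toFinset _ hnodup]
      _ = ((N a : A) : G) := by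
          have huniv : (xs.map (QuotientGroup.mk (s := A))).toFinset = Finset.univ :=
            Finset.eq_univ_iff_forall.mpr fun q => List.mem_toFinset.mpr (hcover q)
          rw [huniv]
      _ = 1 := by rw [hNa]; rfl
  refine ⟨part1, ?_⟩
  have conjpow : ∀ (x h : G) (n : ℕ), (x⁻¹ * h * x) ^ n = x⁻¹ * h ^ n * x := by
    intro x h n
    induction n with
    | zero => simp
    | succ m ih => rw [pow_succ, ih, pow_succ]; group
  have len : ∀ l : List G, ((l.map (List.replicate k)).flatten).length = k * l.length := by
    intro l
    induction l with
    | nil => simp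
    | cons x t ih =>
      simp only [List.map_cons, List.flatten_cons, List.length_append,
        List.length_replicate, List.length_cons, ih]
      ring
  have prodlem : ∀ (l : List G) (g : G),
      (((l.map (List.replicate k)).flatten).map (fun y => y⁻¹ * g * y)).prod
        = (l.map (fun x => x⁻¹ * g ^ k * x)).prod := by
    intro l g
    induction l with
    | nil => simp
    | cons x t ih =>
      simp only [List.map_cons, List.flatten_cons, List.map_append, List.prod_append,
        List.map_replicate, List.prod_replicate, ih, List.prod_cons, conjpow]
  exact ⟨(xs.map (List.replicate k)).flatten, len xs, fun g => by rw [prodlem]; exact part1 g⟩
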